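/- Let (a_m) be a sequence of positive reals with a_k > k^{3k}·Σ_{m=1}^{k−1} a_m for all sufficiently large k. Then there is no nonzero holomorphic function h on the unit disc with h(0) = 0, all Taylor coefficients of absolute value at most 1, and such that the formal power series Σ_{m ≥ 1} a_m·h(t)^m is identically zero (all its coefficients vanish). -/

import Mathlib

open Finset

/-- The coefficient of `t^K` in `h(t)^m`, where `h(t) = Σ_n α_n tⁿ`. -/
noncomputable def powCoeff (α : ℕ → ℂ) (m K : ℕ) : ℂ :=
  ∑ ν ∈ (Fintype.piFinset fun _ : Fin m => Finset.range (K + 1)) |>.filter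
      (fun ν => ∑ i, ν i = K),
    ∏ i, α (ν i)

lemma powCoeff_eq_zero (α : ℕ → ℂ) (M : ℕ) (hα : ∀ j < M, α j = 0)
    (m K : ℕ) (hK : K < M * m) : powCoeff α m K = 0 := by
  unfold powCoeff
  apply Finset.sum_eq_zero
  intro ν hν
  rw [Finset.mem_filter] at hν
  by_contra hne
  have hge : ∀ i, M ≤ ν i := by
    intro i
    by_contra hlt
    push_neg at hlt
    exact hne (Finset.prod_eq_zero (Finset.mem_univ i) (hα _ hlt))
  have : M * m ≤ K := by
    calc M * m = ∑ _i : Fin m, M := by simp [Finset.sum_const, mul_comm]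
    _ ≤ ∑ i, ν i := Finset.sum_le_sum fun i _ => hge i
    _ = K := hν.2
  omega

lemma powCoeff_diag (α : ℕ → ℂ) (M : ℕ) (hα : ∀ j < M, α j = 0)
    (k : ℕ) (hk : 1 ≤ k) : powCoeff α k (k * M) = (α M) ^ k := by
  unfold powCoeff
  have hmem : (fun _ : Fin k => M) ∈
      ((Fintype.piFinset fun _ : Fin k => Finset.range (k * M + 1)) |>.filter
        (fun ν => ∑ i, ν i = k * M)) := by
    rw [Finset.mem_filter]
    constructor
    · rw [Fintype.mem_piFinset]
      intro i
      rw [Finset.mem_range]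
      have : M ≤ k * M := Nat.le_mul_of_pos_left M hk
      omega
    · simp [Finset.sum_const, mul_comm]
  rw [Finset.sum_eq_single_of_mem _ hmem]
  · simp
  · intro ν hν hne
    rw [Finset.mem_filter] at hν
    by_cases hge : ∀ i, M ≤ ν i
    · exfalso
      apply hne
      funext i
      have hsum : ∑ i, ν i = ∑ _i : Fin k, M := by
        rw [hν.2]; simp [Finset.sum_const, mul_comm]
      have := (Finset.sum_eq_sum_iff_of_le (fun i _ => hge i)).mp hsum.symm
      exact (this i (Finset.mem_univ i)).symm
    · push_neg at hge
      obtain ⟨i, hi⟩ := hge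
      exact Finset.prod_eq_zero (Finset.mem_univ i) (hα _ hi)

lemma powCoeff_abs_le (α : ℕ → ℂ) (hα : ∀ n, ‖α n‖ ≤ 1) (m K : ℕ) :
    ‖powCoeff α m K‖ ≤ ((K + 1 : ℕ) : ℝ) ^ m := by
  unfold powCoeff
  set S := ((Fintype.piFinset fun _ : Fin m => Finset.range (K + 1)) |>.filter
      (fun ν => ∑ i, ν i = K)) with hS
  calc ‖∑ ν ∈ S, ∏ i, α (ν i)‖
      ≤ ∑ ν ∈ S, ‖∏ i, α (ν i)‖ := norm_sum_le _ _
    _ ≤ ∑ _ν ∈ S, (1 : ℝ) := by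
        apply Finset.sum_le_sum
        intro ν _
        rw [norm_prod]
        exact Finset.prod_le_one (fun i _ => norm_nonneg _) (fun i _ => hα _)
    _ = (S.card : ℝ) := by simp
    _ ≤ (((Fintype.piFinset fun _ : Fin m => Finset.range (K + 1)).card : ℕ) : ℝ) := by
        exact_mod_cast Finset.card_filter_le _ _
    _ = ((K + 1 : ℕ) : ℝ) ^ m := by
        rw [Fintype.card_piFinset]
        simp

/-- if `a_k > k^{3k}·Σ_{m=1}^{k-1} a_m` for all large `k`, then there is no
nonzero holomorphic `h` on the unit disc with `h(0) = 0`, Taylor coefficients of modulus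
`≤ 1`, such that the formal power series `Σ_{m ≥ 1} a_m h(t)^m` vanishes identically. -/
theorem stmt_12 (a : ℕ → ℝ) (ha : ∀ m : ℕ, 1 ≤ m → 0 < a m)
    (hgrow : ∃ K₀ : ℕ, ∀ k : ℕ, K₀ ≤ k →
      a k > (k : ℝ) ^ (3 * k) * ∑ m ∈ Icc 1 (k - 1), a m) :
    ¬ ∃ (h : ℂ → ℂ) (α : ℕ → ℂ),
        (∀ t : ℂ, ‖t‖ < 1 → HasSum (fun n : ℕ => α n * t ^ n) (h t)) ∧
        h 0 = 0 ∧ (∃ t : ℂ, ‖t‖ < 1 ∧ h t ≠ 0) ∧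
        (∀ n : ℕ, ‖α n‖ ≤ 1) ∧
        (∀ k : ℕ, 1 ≤ k → ∑ m ∈ Icc 1 k, (a m : ℂ) * powCoeff α m k = 0) := by
  rintro ⟨h, α, hsum, h0, ⟨t0, ht0, ht0ne⟩, habs, hvan⟩
  obtain ⟨K₀, hgrow⟩ := hgrow
  -- α 0 = 0
  have hα0 : α 0 = 0 := by
    have h1 := hsum 0 (by simp)
    rw [h0] at h1
    have h2 : HasSum (fun n : ℕ => α n * (0 : ℂ) ^ n) (α 0) := by
      have := hasSum_single (f := fun n : ℕ => α n * (0 : ℂ) ^ n) 0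
        (fun b hb => by simp [zero_pow hb])
      simpa using this
    exact h2.unique h1
  -- some coefficient is nonzero
  have hex : ∃ n, α n ≠ 0 := by
    by_contra hc
    push_neg at hc
    have h1 := hsum t0 ht0
    simp only [hc, zero_mul] at h1
    exact ht0ne (hasSum_zero.unique h1).symm
  set M := Nat.find hex with hMdef
  have hM : α M ≠ 0 := Nat.find_spec hex
  have hMlt : ∀ j < M, α j = 0 := by
    intro j hj
    by_contra hne
    exact absurd hne (Nat.find_min hex hj)
  have hM1 : 1 ≤ M := by
    rcases Nat.eq_zero_or_pos M with h' | h'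
    · exact absurd (h' ▸ hα0) hM
    · exact h'
  set c := ‖α M‖ with hcdef
  have hc : 0 < c := norm_pos_iff.mpr hM
  obtain ⟨N, hN⟩ := exists_nat_ge (1 / c)
  set k := max (max K₀ N) (max 2 (M + 1)) with hkdef
  have hkK₀ : K₀ ≤ k := le_trans (le_max_left _ _) (le_max_left _ _)
  have hkN : N ≤ k := le_trans (le_max_right _ _) (le_max_left _ _)
  have hk2 : 2 ≤ k := le_trans (le_max_left _ _) (le_max_right _ _)
  have hkM : M + 1 ≤ k := le_trans (le_max_right _ _) (le_max_right _ _)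
  have hk1 : 1 ≤ k := by omega
  have hck : 1 ≤ c * k := by
    have hNk : (1 : ℝ) / c ≤ k := le_trans hN (by exact_mod_cast hkN)
    rw [div_le_iff₀ hc] at hNk
    linarith
  -- the vanishing equation at K = k * M
  have hvk := hvan (k * M) (Nat.mul_pos hk1 hM1)
  rw [show (Finset.Icc 1 (k * M)) = Finset.Ioc 0 (k * M) by rw [← Finset.Icc_add_one_left_eq_Ioc]; rfl] at hvk
  rw [← Finset.sum_Ioc_consecutive _ (Nat.zero_le k) (Nat.le_mul_of_pos_right k hM1)] at hvk
  have hzero2 : ∑ m ∈ Finset.Ioc k (k * M), (a m : ℂ) * powCoeff α m (k * M) = 0 := by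
    apply Finset.sum_eq_zero
    intro m hm
    rw [Finset.mem_Ioc] at hm
    rw [powCoeff_eq_zero α M hMlt m (k * M) (by nlinarith [hm.1, hM1])]
    ring
  rw [hzero2, add_zero] at hvk
  have hksucc : k - 1 + 1 = k := Nat.succ_pred_eq_of_pos (Nat.lt_of_lt_of_le Nat.zero_lt_two hk2)
  rw [← hksucc, Finset.sum_Ioc_succ_top (Nat.zero_le _), hksucc] at hvk
  -- isolate the top term
  have htop : (a k : ℂ) * powCoeff α k (k * M) =
      -∑ m ∈ Finset.Ioc 0 (k - 1), (a m : ℂ) * powCoeff α m (k * M) := by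
    linear_combination hvk
  rw [powCoeff_diag α M hMlt k hk1] at htop
  -- take absolute values
  have habs_eq : a k * c ^ k =
      ‖∑ m ∈ Finset.Ioc 0 (k - 1), (a m : ℂ) * powCoeff α m (k * M)‖ := by
    have heq : ‖(a k : ℂ) * α M ^ k‖ = a k * c ^ k := by
      rw [norm_mul, norm_pow, Complex.norm_real, Real.norm_of_nonneg (ha k hk1).le]
    rw [← heq, htop, norm_neg]
  set SS := ∑ m ∈ Finset.Icc 1 (k - 1), a m with hSSdef
  have hIoc : Finset.Icc 1 (k - 1) = Finset.Ioc 0 (k - 1) := by rw [← Finset.Icc_add_one_left_eq_Ioc]; rfl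
  have hSSpos : 0 < SS := by
    apply Finset.sum_pos
    · intro m hm
      rw [Finset.mem_Icc] at hm
      exact ha m hm.1
    · exact ⟨1, by rw [Finset.mem_Icc]; omega⟩
  -- bound each powCoeff
  have hbound : a k * c ^ k ≤ (k : ℝ) ^ (2 * k) * SS := by
    rw [habs_eq, hSSdef, hIoc]
    calc ‖∑ m ∈ Finset.Ioc 0 (k - 1), (a m : ℂ) * powCoeff α m (k * M)‖
        ≤ ∑ m ∈ Finset.Ioc 0 (k - 1), ‖(a m : ℂ) * powCoeff α m (k * M)‖ :=
          norm_sum_le _ _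
      _ ≤ ∑ m ∈ Finset.Ioc 0 (k - 1), (k : ℝ) ^ (2 * k) * a m := by
          apply Finset.sum_le_sum
          intro m hm
          rw [Finset.mem_Ioc] at hm
          rw [norm_mul, Complex.norm_real, Real.norm_of_nonneg (ha m hm.1).le, mul_comm]
          apply mul_le_mul_of_nonneg_right _ (le_of_lt (ha m hm.1))
          calc ‖powCoeff α m (k * M)‖ ≤ ((k * M + 1 : ℕ) : ℝ) ^ m :=
                powCoeff_abs_le α habs m (k * M)
            _ ≤ (k : ℝ) ^ (2 * k) := by
                have hnat : (k * M + 1) ^ m ≤ k ^ (2 * k) := by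
                  calc (k * M + 1) ^ m ≤ (k * k) ^ m := by
                        apply Nat.pow_le_pow_left
                        nlinarith [hkM, hk2]
                    _ = k ^ (2 * m) := by rw [two_mul, pow_add, Nat.mul_pow]
                    _ ≤ k ^ (2 * k) := Nat.pow_le_pow_right (by omega) (by omega)
                calc ((k * M + 1 : ℕ) : ℝ) ^ m = (((k * M + 1) ^ m : ℕ) : ℝ) := by
                      push_cast; ring
                  _ ≤ ((k ^ (2 * k) : ℕ) : ℝ) := by exact_mod_cast hnat
                  _ = (k : ℝ) ^ (2 * k) := by push_cast; ring
      _ = (k : ℝ) ^ (2 * k) * ∑ m ∈ Finset.Ioc 0 (k - 1), a m := by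
          rw [Finset.mul_sum]
  -- conclude
  have hfinal : a k ≤ (k : ℝ) ^ (3 * k) * SS := by
    have hckk : (1 : ℝ) ≤ c ^ k * (k : ℝ) ^ k := by
      calc (1 : ℝ) = 1 ^ k := (one_pow k).symm
        _ ≤ (c * k) ^ k := pow_le_pow_left₀ zero_le_one hck k
        _ = c ^ k * (k : ℝ) ^ k := mul_pow c (k : ℝ) k
    have hak : 0 < a k := ha k hk1
    calc a k = a k * 1 := (mul_one _).symm
      _ ≤ a k * (c ^ k * (k : ℝ) ^ k) := by
          apply mul_le_mul_of_nonneg_left hckk (le_of_lt hak)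
      _ = (a k * c ^ k) * (k : ℝ) ^ k := by ring
      _ ≤ ((k : ℝ) ^ (2 * k) * SS) * (k : ℝ) ^ k := by
          apply mul_le_mul_of_nonneg_right hbound (by positivity)
      _ = (k : ℝ) ^ (3 * k) * SS := by
          rw [show 3 * k = 2 * k + k by ring, pow_add]; ring
  exact absurd hfinal (not_le.mpr (hgrow k hkK₀))
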